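/- (HEDGE formula for feature diversity) Let X be a finite set of species, 𝔽 a finite set of features, α : X → 2^𝔽, ν : 𝔽 → ℝ≥0, and let φ be the associated feature diversity function. Under the g-FOB model with extinction probabilities ε : X → ℝ, for each species x ∈ X the generalized HEDGE score satisfies ψ'_x = Σ_{f ∈ α(x)} ν(f) · ∏_{y ∈ X : f ∈ α(y)} ε_y, where the product now ranges over all species carrying f, including x itself. -/
import Mathlib


open Finset

/-- g-FOB weight of the survivor set `S ⊆ X \ {x}`:
each species `y ≠ x` independently survives with probability `1 - ε y`. -/
noncomputable def gfobWeight {X : Type*} [Fintype X] [DecidableEq X]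
    (ε : X → ℝ) (x : X) (S : Finset X) : ℝ :=
  (∏ y ∈ S, (1 - ε y)) * ∏ y ∈ Finset.univ.erase x \ S, ε y

/-- generalized HED score `ψ_x`: the g-FOB expectation of
`Δ_φ(S, x) = φ(S ∪ {x}) - φ(S)`. -/
noncomputable def psi {X : Type*} [Fintype X] [DecidableEq X]
    (ε : X → ℝ) (φ : Finset X → ℝ) (x : X) : ℝ :=
  ∑ S ∈ (Finset.univ.erase x).powerset,
    gfobWeight ε x S * (φ (S ∪ {x}) - φ S)

/-- generalized HEDGE score `ψ'_x`: the expectation of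
`Δ'_φ(S, x) = φ(S ∪ {x}) - φ(S ∪ I_x)`, averaging also over the fate `I_x` of `x`
(`I_x = {x}` with probability `1 - ε x`, `I_x = ∅` with probability `ε x`). -/
noncomputable def psi' {X : Type*} [Fintype X] [DecidableEq X]
    (ε : X → ℝ) (φ : Finset X → ℝ) (x : X) : ℝ :=
  ∑ S ∈ (Finset.univ.erase x).powerset,
    gfobWeight ε x S *
      ((1 - ε x) * (φ (S ∪ {x}) - φ (S ∪ {x})) +
        ε x * (φ (S ∪ {x}) - φ (S ∪ ∅)))

/-- Feature diversity: `φ(S)` is the sum of the weights `ν f` of all features `f`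
present in at least one species of `S`. -/
noncomputable def featDiv {X 𝔽 : Type*} [DecidableEq 𝔽]
    (α : X → Finset 𝔽) (ν : 𝔽 → ℝ) (S : Finset X) : ℝ :=
  ∑ f ∈ S.biUnion α, ν f

/-- HEDGE formula for feature diversity: under the g-FOB model,
`ψ'_x = Σ_{f ∈ α(x)} ν(f) · Π_{y ∈ X : f ∈ α(y)} ε_y`, where the product ranges over
ALL species carrying `f`, including `x` itself. -/
theorem hedge_featDiv {X 𝔽 : Type*} [Fintype X] [DecidableEq X] [DecidableEq 𝔽]
    (α : X → Finset 𝔽) (ν : 𝔽 → ℝ) (hν : ∀ f, 0 ≤ ν f) (ε : X → ℝ) (x : X) :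
    psi' ε (featDiv α ν) x
      = ∑ f ∈ α x, ν f * ∏ y ∈ Finset.univ.filter (fun y => f ∈ α y), ε y := by
  classical
  have hxY : x ∉ Finset.univ.erase x := Finset.notMem_erase x _
  set Y := Finset.univ.erase x with hY
  have key : ∀ f : 𝔽,
      ∑ S ∈ Y.powerset, gfobWeight ε x S * (if f ∈ S.biUnion α then (0:ℝ) else 1)
        = ∏ y ∈ Y, (if f ∈ α y then ε y else 1) := by
    intro f
    have hterm : ∀ S ∈ Y.powerset,
        gfobWeight ε x S * (if f ∈ S.biUnion α then (0:ℝ) else 1)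
          = (∏ y ∈ S, ((if f ∈ α y then (0:ℝ) else 1) * (1 - ε y))) * ∏ y ∈ Y \ S, ε y := by
      intro S hS
      have hind : (if f ∈ S.biUnion α then (0:ℝ) else 1)
          = ∏ y ∈ S, (if f ∈ α y then (0:ℝ) else 1) := by
        by_cases h : f ∈ S.biUnion α
        · obtain ⟨y, hy, hfy⟩ := Finset.mem_biUnion.1 h
          rw [if_pos h]
          exact (Finset.prod_eq_zero hy (by simp [hfy])).symm
        · rw [if_neg h]
          refine (Finset.prod_eq_one ?_).symm
          intro y hy
          rw [if_neg (fun hf => h (Finset.mem_biUnion.2 ⟨y, hy, hf⟩))]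
      rw [hind]
      unfold gfobWeight
      rw [← hY, Finset.prod_mul_distrib]
      ring
    rw [Finset.sum_congr rfl hterm, ← Finset.prod_add]
    refine Finset.prod_congr rfl fun y _ => ?_
    by_cases h : f ∈ α y <;> simp [h]
  have hdiff : ∀ S ∈ Y.powerset,
      featDiv α ν (S ∪ {x}) - featDiv α ν (S ∪ ∅)
        = ∑ f ∈ α x, ν f * (if f ∈ S.biUnion α then (0:ℝ) else 1) := by
    intro S hS
    have hbi : (S ∪ {x}).biUnion α = S.biUnion α ∪ α x := by
      ext g
      simp only [Finset.mem_biUnion, Finset.mem_union, Finset.mem_singleton]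
      constructor
      · rintro ⟨y, hy | rfl, hg⟩
        · exact Or.inl ⟨y, hy, hg⟩
        · exact Or.inr hg
      · rintro (⟨y, hy, hg⟩ | hg)
        · exact ⟨y, Or.inl hy, hg⟩
        · exact ⟨x, Or.inr rfl, hg⟩
    have hsplit : S.biUnion α ∪ α x = S.biUnion α ∪ (α x \ S.biUnion α) :=
      (Finset.union_sdiff_self_eq_union).symm
    have hdisj : Disjoint (S.biUnion α) (α x \ S.biUnion α) :=
      Finset.disjoint_sdiff
    simp only [featDiv, Finset.union_empty, hbi, hsplit, Finset.sum_union hdisj]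
    rw [add_sub_cancel_left]
    rw [Finset.sdiff_eq_filter, Finset.sum_filter]
    refine Finset.sum_congr rfl fun f _ => ?_
    by_cases h : f ∈ S.biUnion α <;> simp [h]
  unfold psi'
  have step : ∀ S ∈ Y.powerset,
      gfobWeight ε x S *
        ((1 - ε x) * (featDiv α ν (S ∪ {x}) - featDiv α ν (S ∪ {x})) +
          ε x * (featDiv α ν (S ∪ {x}) - featDiv α ν (S ∪ ∅)))
        = ε x * ∑ f ∈ α x, ν f * (gfobWeight ε x S * (if f ∈ S.biUnion α then (0:ℝ) else 1)) := by
    intro S hS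
    rw [sub_self, mul_zero, zero_add, hdiff S hS]
    simp only [Finset.mul_sum]
    exact Finset.sum_congr rfl fun f _ => by ring
  rw [← hY, Finset.sum_congr rfl step]
  rw [← Finset.mul_sum, Finset.sum_comm]
  simp only [← Finset.mul_sum]
  rw [Finset.mul_sum]
  refine Finset.sum_congr rfl fun f hf => ?_
  have hfilter : Finset.univ.filter (fun y => f ∈ α y)
      = insert x (Y.filter (fun y => f ∈ α y)) := by
    ext y
    simp only [Finset.mem_filter, Finset.mem_insert, Finset.mem_univ, true_and, hY,
      Finset.mem_erase]
    constructor
    · intro hy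
      by_cases h : y = x
      · exact Or.inl h
      · exact Or.inr ⟨⟨h, trivial⟩, hy⟩
    · rintro (rfl | ⟨_, hy⟩)
      · exact hf
      · exact hy
  have hx' : x ∉ Y.filter (fun y => f ∈ α y) := fun h => hxY (Finset.mem_filter.1 h).1
  rw [hfilter, Finset.prod_insert hx', Finset.prod_filter, key f]
  ring
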